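/- A domain D of ℝ² ∖ V(g), where g is a tropical polynomial in two variables, is bounded (equivalently, enclosed by a cycle in V(g)) if and only if the lattice point of the dual subdivision Subdiv_g corresponding to D lies in the interior of the Newton polytope Newt(g). More generally, if K is the subcomplex of Subdiv_g dual to V(g) ∩ ℝ²≤0, then D ∈ P₂(g) is enclosed by a cycle of V(g) ∩ ℝ²≤0 if and only if the corresponding 0-simplex lies in the interior of |K|. -/

import Mathlib

/-- A tropical polynomial in two variables:
`g(x,y) = max over (a,b) ∈ support of (coeff (a,b) + a·x + b·y)`. -/
structure TropPoly2 where
  support : Finset (ℕ × ℕ)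
  coeff : ℕ × ℕ → ℝ

namespace TropPoly2

/-- The value of the term with exponent `t` at the point `p`. -/
def val (g : TropPoly2) (t : ℕ × ℕ) (p : ℝ × ℝ) : ℝ :=
  g.coeff t + (t.1 : ℝ) * p.1 + (t.2 : ℝ) * p.2

/-- The (open) domain of `ℝ² ∖ V(g)` corresponding to the term `t`: the locus where
the term `t` strictly dominates all other terms. -/
def domain (g : TropPoly2) (t : ℕ × ℕ) : Set (ℝ × ℝ) :=
  {p | ∀ s ∈ g.support, s ≠ t → g.val s p < g.val t p}

/-- The cell of the dual subdivision `Subdiv_g` selected by a point `p`: the convex hull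
of the exponents of the terms attaining the maximum at `p`. -/
def dualCell (g : TropPoly2) (p : ℝ × ℝ) : Set (ℝ × ℝ) :=
  convexHull ℝ
    {x : ℝ × ℝ | ∃ t ∈ g.support, x = (((t.1 : ℝ), (t.2 : ℝ)) : ℝ × ℝ) ∧
      ∀ s ∈ g.support, g.val s p ≤ g.val t p}

/-- The support `|K|` of the subcomplex of `Subdiv_g` dual to `V(g) ∩ ℝ≤0²`:
the union of the dual cells of all points of the closed third quadrant. -/
def Ksupp (g : TropPoly2) : Set (ℝ × ℝ) :=
  ⋃ p ∈ {p : ℝ × ℝ | p.1 ≤ 0 ∧ p.2 ≤ 0}, dualCell g p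

end TropPoly2

open TropPoly2 Finset

namespace Lem55

noncomputable section
open scoped Classical

def pt (s : ℕ × ℕ) : ℝ × ℝ := (((s.1 : ℝ), (s.2 : ℝ)) : ℝ × ℝ)

def dot (a b : ℝ × ℝ) : ℝ := a.1 * b.1 + a.2 * b.2

lemma dot_add_left (a b c : ℝ × ℝ) : dot (a + b) c = dot a c + dot b c := by
  simp [dot]; ring

lemma dot_sub_left (a b c : ℝ × ℝ) : dot (a - b) c = dot a c - dot b c := by
  simp [dot]; ring

lemma dot_smul_left (r : ℝ) (a c : ℝ × ℝ) : dot (r • a) c = r * dot a c := by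
  simp [dot]; ring

lemma dot_add_right (a b c : ℝ × ℝ) : dot a (b + c) = dot a b + dot a c := by
  simp [dot]; ring

lemma dot_smul_right (r : ℝ) (a c : ℝ × ℝ) : dot a (r • c) = r * dot a c := by
  simp [dot]; ring

lemma dot_zero_right (a : ℝ × ℝ) : dot a 0 = 0 := by simp [dot]

lemma norm_sq_le_dot (v : ℝ × ℝ) : ‖v‖ ^ 2 ≤ dot v v := by
  have h : ‖v‖ = max ‖v.1‖ ‖v.2‖ := rfl
  rcases max_cases ‖v.1‖ ‖v.2‖ with ⟨he, _⟩ | ⟨he, _⟩ <;>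
    rw [h, he] <;> simp only [Real.norm_eq_abs, sq_abs, dot] <;> nlinarith [sq_nonneg v.1, sq_nonneg v.2]

lemma dot_le_two_norm (a b : ℝ × ℝ) : dot a b ≤ 2 * ‖a‖ * ‖b‖ := by
  have h1 : |a.1| ≤ ‖a‖ := norm_fst_le a
  have h2 : |a.2| ≤ ‖a‖ := norm_snd_le a
  have h3 : |b.1| ≤ ‖b‖ := norm_fst_le b
  have h4 : |b.2| ≤ ‖b‖ := norm_snd_le b
  have k1 : a.1 * b.1 ≤ |a.1| * |b.1| := by
    calc a.1 * b.1 ≤ |a.1 * b.1| := le_abs_self _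
    _ = |a.1| * |b.1| := abs_mul _ _
  have k2 : a.2 * b.2 ≤ |a.2| * |b.2| := by
    calc a.2 * b.2 ≤ |a.2 * b.2| := le_abs_self _
    _ = |a.2| * |b.2| := abs_mul _ _
  have hna : (0:ℝ) ≤ ‖a‖ := norm_nonneg a
  have hnb : (0:ℝ) ≤ ‖b‖ := norm_nonneg b
  have m1 : |a.1| * |b.1| ≤ ‖a‖ * ‖b‖ :=
    mul_le_mul h1 h3 (abs_nonneg _) hna
  have m2 : |a.2| * |b.2| ≤ ‖a‖ * ‖b‖ :=
    mul_le_mul h2 h4 (abs_nonneg _) hna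
  simp only [dot]; nlinarith

lemma val_eq (g : TropPoly2) (s : ℕ × ℕ) (p : ℝ × ℝ) :
    g.val s p = g.coeff s + dot (pt s) p := by
  simp [TropPoly2.val, dot, pt]; ring

lemma val_add_smul (g : TropPoly2) (s : ℕ × ℕ) (p v : ℝ × ℝ) (lam : ℝ) :
    g.val s (p + lam • v) = g.val s p + lam * dot (pt s) v := by
  simp [TropPoly2.val, dot, pt]; ring

end

end Lem55

section Chunk2
open Lem55 TropPoly2 Finset

variable (g : TropPoly2)

namespace Lem55

noncomputable section
open scoped Classical

/-- max of the tropical polynomial -/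
def gsup (g : TropPoly2) (hs : g.support.Nonempty) (p : ℝ × ℝ) : ℝ :=
  g.support.sup' hs (fun s => g.val s p)

/-- the function to minimize: `f_x(p) = g(p) - ⟨x,p⟩` -/
def fx (g : TropPoly2) (hs : g.support.Nonempty) (x p : ℝ × ℝ) : ℝ :=
  gsup g hs p - dot x p

lemma val_le_gsup (g : TropPoly2) (hs : g.support.Nonempty) {s : ℕ × ℕ}
    (h : s ∈ g.support) (p : ℝ × ℝ) : g.val s p ≤ gsup g hs p :=
  Finset.le_sup' (fun s => g.val s p) h

/-- the generating set of the dual cell -/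
lemma dualCell_def (p : ℝ × ℝ) :
    dualCell g p = convexHull ℝ {x : ℝ × ℝ | ∃ u ∈ g.support, x = pt u ∧
      ∀ s ∈ g.support, g.val s p ≤ g.val u p} := rfl

lemma genSet_eq (p : ℝ × ℝ) :
    {x : ℝ × ℝ | ∃ u ∈ g.support, x = pt u ∧ ∀ s ∈ g.support, g.val s p ≤ g.val u p}
      = pt '' ((g.support.filter (fun u => ∀ s ∈ g.support, g.val s p ≤ g.val u p) : Finset (ℕ × ℕ)) : Set (ℕ × ℕ)) := by
  ext y
  simp only [Set.mem_setOf_eq, Set.mem_image, Finset.coe_filter, Set.mem_setOf_eq]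
  constructor
  · rintro ⟨u, hu, rfl, hmax⟩; exact ⟨u, ⟨hu, hmax⟩, rfl⟩
  · rintro ⟨u, ⟨hu, hmax⟩, rfl⟩; exact ⟨u, hu, rfl, hmax⟩

lemma dot_sum_left {ι : Type*} (T : Finset ι) (w : ι → ℝ) (z : ι → ℝ × ℝ) (q : ℝ × ℝ) :
    dot (∑ i ∈ T, w i • z i) q = ∑ i ∈ T, w i * dot (z i) q := by
  simp only [dot, Prod.fst_sum, Prod.snd_sum, Prod.smul_fst, Prod.smul_snd, smul_eq_mul,
    Finset.sum_mul, ← Finset.sum_add_distrib]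
  exact Finset.sum_congr rfl (by intros; ring)

lemma hull_dot_le {S : Set (ℝ × ℝ)} {v : ℝ × ℝ} {M : ℝ} (h : ∀ y ∈ S, dot y v ≤ M) :
    ∀ x ∈ convexHull ℝ S, dot x v ≤ M := by
  intro x hx
  have hlin : IsLinearMap ℝ (fun y : ℝ × ℝ => dot y v) :=
    ⟨fun a b => by simp [dot]; ring, fun c a => by simp [dot]; ring⟩
  exact convexHull_min h (convex_halfSpace_le hlin M) hx

lemma sep_point {C : Set (ℝ × ℝ)} (hC : Convex ℝ C) (hcl : IsClosed C) {x : ℝ × ℝ}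
    (hx : x ∉ C) : ∃ (v : ℝ × ℝ) (u : ℝ), (∀ y ∈ C, dot y v < u) ∧ u < dot x v := by
  obtain ⟨f, u, h1, h2⟩ := geometric_hahn_banach_closed_point hC hcl hx
  have key : ∀ y : ℝ × ℝ, dot y (f (1, 0), f (0, 1)) = f y := by
    intro y
    have hy : y = y.1 • ((1 : ℝ), (0 : ℝ)) + y.2 • ((0 : ℝ), (1 : ℝ)) := by
      ext <;> simp
    conv_rhs => rw [hy]
    rw [map_add, map_smul, map_smul]
    simp [dot]
  exact ⟨(f (1, 0), f (0, 1)), u, fun y hy => by rw [key]; exact h1 y hy, by rw [key]; exact h2⟩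

/-- If `x` lies in the dual cell at `p`, then `p` is a global minimizer of `f_x`. -/
lemma min_of_mem_dualCell (hs : g.support.Nonempty) {x p : ℝ × ℝ}
    (hx : x ∈ dualCell g p) : ∀ q, fx g hs x p ≤ fx g hs x q := by
  intro q
  rw [dualCell_def, _root_.convexHull_eq] at hx
  obtain ⟨ι, T, w, z, hw0, hw1, hz, hcm⟩ := hx
  have hzz : ∀ i ∈ T, ∃ u, u ∈ g.support ∧ z i = pt u ∧ ∀ s ∈ g.support, g.val s p ≤ g.val u p := by
    intro i hi; obtain ⟨u, hu, he, hm⟩ := hz i hi; exact ⟨u, hu, he, hm⟩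
  choose u humem huz humax using hzz
  have hx_eq : x = ∑ i ∈ T.attach, w i • z i := by
    rw [← hcm, Finset.centerMass_eq_of_sum_1 _ _ hw1, ← Finset.sum_attach T (fun i => w i • z i)]
  -- the common value
  have hvalp : ∀ i (hi : i ∈ T), g.val (u i hi) p = gsup g hs p := by
    intro i hi
    exact le_antisymm (val_le_gsup g hs (humem i hi) p)
      (Finset.sup'_le _ _ (fun s hsmem => humax i hi s hsmem))
  have hdotx : ∀ r : ℝ × ℝ, dot x r = ∑ i ∈ T.attach, w i.1 * dot (pt (u i.1 i.2)) r := by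
    intro r
    rw [hx_eq, dot_sum_left]
    exact Finset.sum_congr rfl (fun i _ => by rw [huz i.1 i.2])
  have hw1' : ∑ i ∈ T.attach, w i.1 = 1 := by rw [Finset.sum_attach]; exact hw1
  -- key computation
  have hWp : fx g hs x p = ∑ i ∈ T.attach, w i.1 * g.coeff (u i.1 i.2) := by
    have : ∀ i : {a // a ∈ T}, w i.1 * g.coeff (u i.1 i.2)
        = w i.1 * gsup g hs p - w i.1 * dot (pt (u i.1 i.2)) p := by
      intro i
      have hv := val_eq g (u i.1 i.2) p
      rw [hvalp i.1 i.2] at hv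
      have heq : g.coeff (u i.1 i.2) = gsup g hs p - dot (pt (u i.1 i.2)) p := by linarith
      rw [heq]; ring
    rw [Finset.sum_congr rfl (fun i _ => this i), Finset.sum_sub_distrib, ← Finset.sum_mul,
      hw1', one_mul, ← hdotx]
    rfl
  have hWq : fx g hs x q ≥ ∑ i ∈ T.attach, w i.1 * g.coeff (u i.1 i.2) := by
    have hterm : ∀ i : {a // a ∈ T}, w i.1 * g.coeff (u i.1 i.2)
        ≤ w i.1 * gsup g hs q - w i.1 * dot (pt (u i.1 i.2)) q := by
      intro i
      have hv := val_eq g (u i.1 i.2) q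
      have hle : g.val (u i.1 i.2) q ≤ gsup g hs q := val_le_gsup g hs (humem i.1 i.2) q
      have hw0' : 0 ≤ w i.1 := hw0 i.1 i.2
      nlinarith
    calc ∑ i ∈ T.attach, w i.1 * g.coeff (u i.1 i.2)
        ≤ ∑ i ∈ T.attach, (w i.1 * gsup g hs q - w i.1 * dot (pt (u i.1 i.2)) q) :=
          Finset.sum_le_sum (fun i _ => hterm i)
      _ = gsup g hs q - dot x q := by
          rw [Finset.sum_sub_distrib, ← Finset.sum_mul, hw1', one_mul, ← hdotx]
      _ = fx g hs x q := rfl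
  linarith [hWp ▸ hWq]

end

end Lem55
end Chunk2
section Chunk3
open Lem55 TropPoly2 Finset

namespace Lem55

noncomputable section
open scoped Classical

variable (g : TropPoly2)

lemma genSet_finite (p : ℝ × ℝ) :
    Set.Finite {x : ℝ × ℝ | ∃ u ∈ g.support, x = pt u ∧
      ∀ s ∈ g.support, g.val s p ≤ g.val u p} := by
  apply Set.Finite.subset (Set.Finite.image pt g.support.finite_toSet)
  rintro y ⟨u, hu, rfl, -⟩
  exact ⟨u, hu, rfl⟩

lemma exists_maximizer (hs : g.support.Nonempty) (p : ℝ × ℝ) :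
    ∃ u ∈ g.support, gsup g hs p = g.val u p ∧ ∀ s ∈ g.support, g.val s p ≤ g.val u p := by
  obtain ⟨u, hu, he⟩ := Finset.exists_mem_eq_sup' hs (fun s => g.val s p)
  exact ⟨u, hu, he, fun s hsm => he ▸ Finset.le_sup' (fun s => g.val s p) hsm⟩

/-- If `p` is a global minimizer of `f_x`, then `x` lies in the dual cell at `p`. -/
lemma mem_dualCell_of_min (hs : g.support.Nonempty) {x p : ℝ × ℝ}
    (hmin : ∀ q, fx g hs x p ≤ fx g hs x q) : x ∈ dualCell g p := by
  by_contra hx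
  rw [dualCell_def] at hx
  set G := {y : ℝ × ℝ | ∃ u ∈ g.support, y = pt u ∧
      ∀ s ∈ g.support, g.val s p ≤ g.val u p} with hG
  have hcl : IsClosed (convexHull ℝ G) := ((genSet_finite g p).isCompact_convexHull ℝ).isClosed
  obtain ⟨v, u0, hvu, hxu⟩ := sep_point (convex_convexHull ℝ G) hcl hx
  set β := dot x v - u0 with hβ
  have hβpos : 0 < β := by simp only [hβ]; linarith
  -- non-maximizers
  set N := g.support.filter (fun s => ¬ ∀ s' ∈ g.support, g.val s' p ≤ g.val s p) with hN
  set γ := if hNe : N.Nonempty then N.inf' hNe (fun s => gsup g hs p - g.val s p) else 1 with hγ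
  have hγpos : 0 < γ := by
    rw [hγ]
    split_ifs with hNe
    · rw [Finset.lt_inf'_iff]
      intro s hsN
      rw [hN, Finset.mem_filter] at hsN
      obtain ⟨hsm, hnotmax⟩ := hsN
      push_neg at hnotmax
      obtain ⟨s', hs'm, hlt⟩ := hnotmax
      have := val_le_gsup g hs hs'm p
      linarith
    · norm_num
  have hγle : ∀ s ∈ N, γ ≤ gsup g hs p - g.val s p := by
    intro s hsN
    rw [hγ]
    rw [dif_pos ⟨s, hsN⟩]
    exact Finset.inf'_le _ hsN
  set K := g.support.sup' hs (fun s => |dot (pt s - x) v|) with hK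
  have hK0 : 0 ≤ K := le_trans (abs_nonneg _) (Finset.le_sup' (fun s => |dot (pt s - x) v|) hs.choose_spec)
  have hKle : ∀ s ∈ g.support, dot (pt s - x) v ≤ K :=
    fun s hsm => le_trans (le_abs_self _) (Finset.le_sup' (fun s => |dot (pt s - x) v|) hsm)
  set lam := γ / (2 * (K + 1)) with hlam
  have hlampos : 0 < lam := by positivity
  have hlamK : lam * K ≤ γ / 2 := by
    rw [hlam]
    rw [div_mul_eq_mul_div, div_le_div_iff₀ (by positivity) (by norm_num)]
    nlinarith
  -- show fx decreases
  have hdec : fx g hs x (p + lam • v) < fx g hs x p := by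
    have hgoal : ∀ s ∈ g.support,
        g.val s (p + lam • v) - dot x (p + lam • v) < fx g hs x p := by
      intro s hsm
      rw [val_add_smul, dot_add_right, dot_smul_right]
      have hsub : dot (pt s) v - dot x v = dot (pt s - x) v := (dot_sub_left _ _ _).symm
      by_cases hmax : ∀ s' ∈ g.support, g.val s' p ≤ g.val s p
      · -- maximizer : pt s ∈ G
        have hmemG : pt s ∈ convexHull ℝ G := subset_convexHull ℝ G ⟨s, hsm, rfl, hmax⟩
        have h1 : dot (pt s) v < u0 := hvu _ hmemG
        have h2 : dot (pt s - x) v < -β := by rw [dot_sub_left]; simp only [hβ]; linarith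
        have hvp : g.val s p = gsup g hs p := le_antisymm (val_le_gsup g hs hsm p)
          (Finset.sup'_le _ _ hmax)
        have : lam * dot (pt s) v - lam * dot x v < 0 := by
          have := mul_lt_mul_of_pos_left h2 hlampos
          rw [mul_comm lam (dot (pt s - x) v)] at this
          rw [show lam * dot (pt s) v - lam * dot x v = dot (pt s - x) v * lam by
            rw [dot_sub_left]; ring]
          nlinarith
        simp only [fx]
        linarith [hvp ▸ le_refl (g.val s p)]
      · -- non-maximizer
        have hsN : s ∈ N := by rw [hN, Finset.mem_filter]; exact ⟨hsm, hmax⟩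
        have h1 : γ ≤ gsup g hs p - g.val s p := hγle s hsN
        have h2 : lam * dot (pt s - x) v ≤ γ / 2 := by
          calc lam * dot (pt s - x) v ≤ lam * K :=
                mul_le_mul_of_nonneg_left (hKle s hsm) hlampos.le
            _ ≤ γ / 2 := hlamK
        simp only [fx]
        have h3 : lam * dot (pt s) v - lam * dot x v = lam * dot (pt s - x) v := by
          rw [dot_sub_left]; ring
        linarith
    have := Finset.sup'_lt_iff hs (f := fun s => g.val s (p + lam • v))
      (a := fx g hs x p + dot x (p + lam • v))
    simp only [fx]
    have h4 : gsup g hs (p + lam • v) < fx g hs x p + dot x (p + lam • v) := by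
      rw [gsup, Finset.sup'_lt_iff hs]
      intro s hsm
      linarith [hgoal s hsm]
    simp only [fx] at h4
    linarith
  exact absurd (hmin (p + lam • v)) (not_le.mpr hdec)

end

end Lem55
end Chunk3
section Chunk4
open Lem55 TropPoly2 Finset

namespace Lem55

noncomputable section
open scoped Classical

variable (g : TropPoly2)

def Newt (g : TropPoly2) : Set (ℝ × ℝ) := convexHull ℝ (pt '' (g.support : Set (ℕ × ℕ)))

lemma eps_dir (hs : g.support.Nonempty) {x : ℝ × ℝ} (hx : x ∈ interior (Newt g)) :
    ∃ ε > 0, ∀ v : ℝ × ℝ, ∃ s ∈ g.support, ε * ‖v‖ ≤ dot (pt s - x) v := by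
  rw [mem_interior_iff_mem_nhds, Metric.mem_nhds_iff] at hx
  obtain ⟨ρ, hρ, hball⟩ := hx
  refine ⟨ρ / 2, by positivity, fun v => ?_⟩
  by_cases hv : v = 0
  · obtain ⟨s0, hs0⟩ := hs
    refine ⟨s0, hs0, ?_⟩
    rw [hv]
    simp [dot_zero_right]
  · have hnv : 0 < ‖v‖ := norm_pos_iff.mpr hv
    set y := x + (ρ / (2 * ‖v‖)) • v with hy
    have hymem : y ∈ Newt g := by
      apply hball
      rw [Metric.mem_ball, hy, dist_eq_norm]
      have heq : x + (ρ / (2 * ‖v‖)) • v - x = (ρ / (2 * ‖v‖)) • v := by abel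
      rw [heq, norm_smul, Real.norm_eq_abs, abs_of_pos (by positivity)]
      rw [div_mul_eq_mul_div, mul_comm 2 ‖v‖, ← div_div, mul_div_assoc, div_self hnv.ne',
        mul_one]
      linarith
    obtain ⟨s0, hs0, he⟩ := Finset.exists_mem_eq_sup' hs (fun s => dot (pt s) v)
    have hyle : dot y v ≤ dot (pt s0) v := by
      rw [← he]
      refine hull_dot_le (fun z hz => ?_) y hymem
      obtain ⟨u, hu, rfl⟩ := hz
      exact Finset.le_sup' (fun s => dot (pt s) v) hu
    have hdoty : dot y v = dot x v + (ρ / (2 * ‖v‖)) * dot v v := by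
      rw [hy, dot_add_left, dot_smul_left]
    have hvv : ‖v‖ ^ 2 ≤ dot v v := norm_sq_le_dot v
    refine ⟨s0, hs0, ?_⟩
    rw [dot_sub_left]
    have h1 : (ρ / (2 * ‖v‖)) * ‖v‖ ^ 2 ≤ (ρ / (2 * ‖v‖)) * dot v v :=
      mul_le_mul_of_nonneg_left hvv (by positivity)
    have h2 : (ρ / (2 * ‖v‖)) * ‖v‖ ^ 2 = (ρ / 2) * ‖v‖ := by
      field_simp
    nlinarith

lemma fx_continuous (hs : g.support.Nonempty) (x : ℝ × ℝ) : Continuous (fx g hs x) := by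
  have h1 : Continuous (fun p : ℝ × ℝ => gsup g hs p) := by
    apply Continuous.finset_sup'_apply hs
    intro s _
    show Continuous (fun p : ℝ × ℝ => g.coeff s + (s.1 : ℝ) * p.1 + (s.2 : ℝ) * p.2)
    exact ((continuous_const.add (continuous_const.mul continuous_fst)).add
      (continuous_const.mul continuous_snd))
  have h2 : Continuous (fun p : ℝ × ℝ => dot x p) := by
    simp only [dot]
    exact ((continuous_const.mul continuous_fst).add (continuous_const.mul continuous_snd))
  exact h1.sub h2

lemma exists_min (hs : g.support.Nonempty) {x : ℝ × ℝ} (hx : x ∈ interior (Newt g)) :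
    ∃ p, ∀ q, fx g hs x p ≤ fx g hs x q := by
  obtain ⟨ε, hε, hdir⟩ := eps_dir g hs hx
  set cmin := g.support.inf' hs (fun s => g.coeff s) with hcmin
  have hgrowth : ∀ q : ℝ × ℝ, cmin + ε * ‖q‖ ≤ fx g hs x q := by
    intro q
    obtain ⟨s, hsm, hsq⟩ := hdir q
    have h1 : g.val s q ≤ gsup g hs q := val_le_gsup g hs hsm q
    have h2 : cmin ≤ g.coeff s := Finset.inf'_le _ hsm
    have h3 := val_eq g s q
    have h4 : dot (pt s - x) q = dot (pt s) q - dot x q := dot_sub_left _ _ _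
    simp only [fx]
    linarith
  set R := (fx g hs x 0 - cmin) / ε with hR
  have hfx0 : cmin ≤ fx g hs x 0 := by
    have h := hgrowth 0
    simp only [norm_zero, mul_zero, add_zero] at h
    exact h
  have hR0 : 0 ≤ R := by rw [hR]; exact div_nonneg (by linarith) hε.le
  have hεR : ε * R = fx g hs x 0 - cmin := by
    rw [hR, mul_div_cancel₀ _ hε.ne']
  obtain ⟨p₁, hp₁mem, hp₁min⟩ := (isCompact_closedBall (0 : ℝ × ℝ) R).exists_isMinOn
    ⟨0, Metric.mem_closedBall_self hR0⟩ (fx_continuous g hs x).continuousOn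
  refine ⟨p₁, fun q => ?_⟩
  by_cases hq : q ∈ Metric.closedBall (0 : ℝ × ℝ) R
  · exact (isMinOn_iff.mp hp₁min) q hq
  · have hnq : R < ‖q‖ := by
      rw [Metric.mem_closedBall, dist_zero_right, not_le] at hq
      exact hq
    have h0 : fx g hs x p₁ ≤ fx g hs x 0 :=
      (isMinOn_iff.mp hp₁min) 0 (Metric.mem_closedBall_self hR0)
    have h1 := hgrowth q
    nlinarith
end

end Lem55
end Chunk4
section Chunk5
open Lem55 TropPoly2 Finset

namespace Lem55

noncomputable section
open scoped Classical

variable (g : TropPoly2) (t : ℕ × ℕ)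

def Aset (g : TropPoly2) (t : ℕ × ℕ) : Set (ℝ × ℝ) :=
  {p : ℝ × ℝ | ∀ s ∈ g.support, g.val s p ≤ g.val t p}

lemma val_continuous (s : ℕ × ℕ) : Continuous (fun p : ℝ × ℝ => g.val s p) := by
  show Continuous (fun p : ℝ × ℝ => g.coeff s + (s.1 : ℝ) * p.1 + (s.2 : ℝ) * p.2)
  exact ((continuous_const.add (continuous_const.mul continuous_fst)).add
    (continuous_const.mul continuous_snd))

lemma Aset_closed : IsClosed (Aset g t) := by
  have heq : Aset g t = ⋂ s ∈ g.support, {p : ℝ × ℝ | g.val s p ≤ g.val t p} := by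
    ext p; simp [Aset]
  rw [heq]
  exact isClosed_biInter (fun s _ => isClosed_le (val_continuous g s) (val_continuous g t))

lemma domain_subset_Aset : domain g t ⊆ Aset g t := by
  intro p hp s hsm
  by_cases hst : s = t
  · rw [hst]
  · exact (hp s hsm hst).le

lemma domain_open : IsOpen (domain g t) := by
  have heq : domain g t = ⋂ s ∈ g.support, {p : ℝ × ℝ | s ≠ t → g.val s p < g.val t p} := by
    ext p; simp [TropPoly2.domain]
  rw [heq]
  apply isOpen_biInter_finset
  intro s _
  by_cases hst : s = t
  · simp [hst]
  · have : {p : ℝ × ℝ | s ≠ t → g.val s p < g.val t p}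
        = {p : ℝ × ℝ | g.val s p < g.val t p} := by
      ext p; simp [hst]
    rw [this]
    exact isOpen_lt (val_continuous g s) (val_continuous g t)

lemma Aset_subset_closure (hne : (domain g t).Nonempty) :
    Aset g t ⊆ closure (domain g t) := by
  intro p hp
  obtain ⟨p₀, hp₀⟩ := hne
  rw [Metric.mem_closure_iff]
  intro ε hε
  set d := dist p p₀ with hd
  have hd0 : 0 ≤ d := dist_nonneg
  set lam := min (ε / (2 * (d + 1))) 1 with hlam
  have hlampos : 0 < lam := lt_min (by positivity) one_pos
  have hlamle1 : lam ≤ 1 := min_le_right _ _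
  refine ⟨p + lam • (p₀ - p), ?_, ?_⟩
  · intro s hsm hst
    have hcombo : ∀ u : ℕ × ℕ, g.val u (p + lam • (p₀ - p))
        = (1 - lam) * g.val u p + lam * g.val u p₀ := by
      intro u
      simp only [TropPoly2.val, Prod.fst_add, Prod.snd_add, Prod.smul_fst, Prod.smul_snd,
        Prod.fst_sub, Prod.snd_sub, smul_eq_mul]
      ring
    rw [hcombo s, hcombo t]
    have h1 : g.val s p ≤ g.val t p := hp s hsm
    have h2 : g.val s p₀ < g.val t p₀ := hp₀ s hsm hst
    nlinarith
  · rw [dist_comm, dist_eq_norm]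
    have heq : p + lam • (p₀ - p) - p = lam • (p₀ - p) := by abel
    rw [heq, norm_smul, Real.norm_eq_abs, abs_of_pos hlampos]
    have hnorm : ‖p₀ - p‖ = d := by rw [hd, dist_comm, dist_eq_norm]
    rw [hnorm]
    have hle : lam ≤ ε / (2 * (d + 1)) := min_le_left _ _
    have : lam * d ≤ ε / (2 * (d + 1)) * d := mul_le_mul_of_nonneg_right hle hd0
    have h2 : ε / (2 * (d + 1)) * d < ε := by
      rw [div_mul_eq_mul_div, div_lt_iff₀ (by positivity)]
      nlinarith
    linarith

lemma gsup_eq_val_t (hs : g.support.Nonempty) {p : ℝ × ℝ} (ht : t ∈ g.support)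
    (hp : p ∈ Aset g t) : gsup g hs p = g.val t p :=
  le_antisymm (Finset.sup'_le _ _ hp) (Finset.le_sup' (fun s => g.val s p) ht)

lemma fx_t_ge (hs : g.support.Nonempty) (ht : t ∈ g.support) (p : ℝ × ℝ) :
    g.coeff t ≤ fx g hs (pt t) p := by
  have h1 : g.val t p ≤ gsup g hs p := val_le_gsup g hs ht p
  have h2 := val_eq g t p
  simp only [fx]
  linarith

lemma mem_Aset_iff_fx (hs : g.support.Nonempty) (ht : t ∈ g.support) (p : ℝ × ℝ) :
    p ∈ Aset g t ↔ fx g hs (pt t) p = g.coeff t := by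
  constructor
  · intro hp
    simp only [fx]
    rw [gsup_eq_val_t g t hs ht hp, val_eq g t p]
    ring
  · intro hp s hsm
    have h1 : g.val s p ≤ gsup g hs p := val_le_gsup g hs hsm p
    have h2 := val_eq g t p
    simp only [fx] at hp
    linarith

lemma exists_delta :
    ∃ δ > 0, ∀ S : Finset (ℕ × ℕ), S ⊆ g.support →
      pt t ∉ convexHull ℝ (pt '' (S : Set (ℕ × ℕ))) →
      ∀ y ∈ convexHull ℝ (pt '' (S : Set (ℕ × ℕ))), δ ≤ dist (pt t) y := by
  set P : Finset (Finset (ℕ × ℕ)) := g.support.powerset.filter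
    (fun S : Finset (ℕ × ℕ) =>
      S.Nonempty ∧ pt t ∉ convexHull ℝ (pt '' ((S : Set (ℕ × ℕ))))) with hP
  have hkey : ∀ S ∈ P, 0 < Metric.infDist (pt t) (convexHull ℝ (pt '' (S : Set (ℕ × ℕ)))) := by
    intro S hSP
    rw [hP, Finset.mem_filter] at hSP
    obtain ⟨-, hSne, hSnot⟩ := hSP
    have hfin : (pt '' (S : Set (ℕ × ℕ))).Finite := Set.Finite.image _ S.finite_toSet
    have hcl : IsClosed (convexHull ℝ (pt '' (S : Set (ℕ × ℕ)))) :=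
      (hfin.isCompact_convexHull ℝ).isClosed
    have hnem : (convexHull ℝ (pt '' (S : Set (ℕ × ℕ)))).Nonempty := by
      obtain ⟨u, hu⟩ := hSne
      exact ⟨pt u, subset_convexHull ℝ _ ⟨u, hu, rfl⟩⟩
    exact (hcl.notMem_iff_infDist_pos hnem).mp hSnot
  rcases P.eq_empty_or_nonempty with hPe | hPne
  · refine ⟨1, one_pos, fun S hsub hnot y hy => ?_⟩
    rcases S.eq_empty_or_nonempty with rfl | hSne
    · simp at hy
    · exfalso
      have : S ∈ P := by
        rw [hP, Finset.mem_filter, Finset.mem_powerset]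
        exact ⟨hsub, hSne, hnot⟩
      rw [hPe] at this
      simp at this
  · refine ⟨P.inf' hPne
      (fun S => Metric.infDist (pt t) (convexHull ℝ (pt '' (S : Set (ℕ × ℕ))))), ?_, ?_⟩
    · exact (Finset.lt_inf'_iff hPne).mpr hkey
    · intro S hsub hnot y hy
      rcases S.eq_empty_or_nonempty with rfl | hSne
      · simp at hy
      · have hSP : S ∈ P := by
          rw [hP, Finset.mem_filter, Finset.mem_powerset]
          exact ⟨hsub, hSne, hnot⟩
        have h1 := Finset.inf'_le
          (fun S : Finset (ℕ × ℕ) =>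
            Metric.infDist (pt t) (convexHull ℝ (pt '' (S : Set (ℕ × ℕ))))) hSP
        exact h1.trans (Metric.infDist_le_dist_of_mem hy)

/-- Key δ-lemma: any global minimizer of `f_x` for `x` within `δ` of `pt t` lies in `Aset`. -/
lemma min_mem_Aset (hs : g.support.Nonempty) (ht : t ∈ g.support)
    (hne : (domain g t).Nonempty) {δ : ℝ}
    (hδ : ∀ S : Finset (ℕ × ℕ), S ⊆ g.support →
      pt t ∉ convexHull ℝ (pt '' (S : Set (ℕ × ℕ))) →
      ∀ y ∈ convexHull ℝ (pt '' (S : Set (ℕ × ℕ))), δ ≤ dist (pt t) y)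
    {x p : ℝ × ℝ} (hdist : dist (pt t) x < δ)
    (hmin : ∀ q, fx g hs x p ≤ fx g hs x q) : p ∈ Aset g t := by
  have hxcell : x ∈ dualCell g p := mem_dualCell_of_min g hs hmin
  set S := g.support.filter (fun u => ∀ s ∈ g.support, g.val s p ≤ g.val u p) with hS
  have hcelleq : dualCell g p = convexHull ℝ (pt '' (S : Set (ℕ × ℕ))) := by
    rw [dualCell_def, genSet_eq]
  have htmem : pt t ∈ dualCell g p := by
    by_contra htnot
    rw [hcelleq] at htnot hxcell
    exact absurd (hδ S (Finset.filter_subset _ _) htnot x hxcell) (not_le.mpr hdist)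
  have hminT : ∀ q, fx g hs (pt t) p ≤ fx g hs (pt t) q := min_of_mem_dualCell g hs htmem
  obtain ⟨p₀, hp₀⟩ := hne
  have hp₀A : p₀ ∈ Aset g t := domain_subset_Aset g t hp₀
  have h1 : fx g hs (pt t) p₀ = g.coeff t := (mem_Aset_iff_fx g t hs ht p₀).mp hp₀A
  have h2 : fx g hs (pt t) p ≤ g.coeff t := h1 ▸ hminT p₀
  have h3 : g.coeff t ≤ fx g hs (pt t) p := fx_t_ge g t hs ht p
  exact (mem_Aset_iff_fx g t hs ht p).mpr (le_antisymm h2 h3)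

end

end Lem55
end Chunk5
section Chunk6
open Lem55 TropPoly2 Finset

namespace Lem55

noncomputable section
open scoped Classical

variable (g : TropPoly2) (t : ℕ × ℕ)

lemma ray_in_domain {p₀ v : ℝ × ℝ} (hp₀ : p₀ ∈ domain g t)
    (hv : ∀ s ∈ g.support, dot (pt s - pt t) v ≤ 0) {lam : ℝ} (hlam : 0 ≤ lam) :
    p₀ + lam • v ∈ domain g t := by
  intro s hsm hst
  rw [val_add_smul, val_add_smul]
  have h1 : g.val s p₀ < g.val t p₀ := hp₀ s hsm hst
  have h2 : dot (pt s - pt t) v ≤ 0 := hv s hsm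
  rw [dot_sub_left] at h2
  nlinarith

lemma interior_of_bounded (ht : t ∈ g.support)
    (hne : (domain g t).Nonempty) (hb : Bornology.IsBounded (domain g t)) :
    pt t ∈ interior (Newt g) := by
  have hs : g.support.Nonempty := ⟨t, ht⟩
  -- (i) every nonzero direction has a strictly increasing exponent
  have hdir : ∀ v : ℝ × ℝ, v ≠ 0 → ∃ s ∈ g.support, 0 < dot (pt s - pt t) v := by
    intro v hv
    by_contra hcon
    push_neg at hcon
    obtain ⟨p₀, hp₀⟩ := hne
    obtain ⟨R, hR⟩ := (Metric.isBounded_iff_subset_closedBall 0).mp hb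
    have hnv : 0 < ‖v‖ := norm_pos_iff.mpr hv
    set lam := (R + ‖p₀‖ + 1) / ‖v‖ with hlam
    have hRpos : 0 ≤ R := by
      have := hR hp₀
      rw [Metric.mem_closedBall, dist_zero_right] at this
      linarith [norm_nonneg p₀]
    have hlam0 : 0 ≤ lam := by positivity
    have hmem : p₀ + lam • v ∈ domain g t := ray_in_domain g t hp₀ hcon hlam0
    have hball := hR hmem
    rw [Metric.mem_closedBall, dist_zero_right] at hball
    have h1 : ‖lam • v‖ ≤ ‖p₀ + lam • v‖ + ‖p₀‖ := by
      have := norm_sub_le (p₀ + lam • v) p₀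
      have heq : p₀ + lam • v - p₀ = lam • v := by abel
      rw [heq] at this
      linarith
    rw [norm_smul, Real.norm_eq_abs, abs_of_nonneg hlam0, hlam,
      div_mul_cancel₀ _ hnv.ne'] at h1
    linarith
  -- (ii) uniform lower bound on the sphere
  set F := fun v : ℝ × ℝ => g.support.sup' hs (fun s => dot (pt s - pt t) v) with hF
  have hFcont : Continuous F := by
    apply Continuous.finset_sup'_apply hs
    intro s _
    show Continuous (fun v : ℝ × ℝ => (pt s - pt t).1 * v.1 + (pt s - pt t).2 * v.2)
    exact ((continuous_const.mul continuous_fst).add (continuous_const.mul continuous_snd))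
  have hsph : ((1 : ℝ), (0 : ℝ)) ∈ Metric.sphere (0 : ℝ × ℝ) 1 := by
    rw [Metric.mem_sphere, dist_zero_right]
    rw [Prod.norm_def]
    norm_num
  obtain ⟨v₀, hv₀mem, hv₀min⟩ := (isCompact_sphere (0 : ℝ × ℝ) 1).exists_isMinOn
    ⟨_, hsph⟩ hFcont.continuousOn
  have hv₀norm : ‖v₀‖ = 1 := by
    rw [Metric.mem_sphere, dist_zero_right] at hv₀mem; exact hv₀mem
  have hv₀ne : v₀ ≠ 0 := by
    intro h; rw [h, norm_zero] at hv₀norm; norm_num at hv₀norm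
  set ε := F v₀ with hε
  have hεpos : 0 < ε := by
    obtain ⟨s, hsm, hspos⟩ := hdir v₀ hv₀ne
    exact hspos.trans_le (Finset.le_sup' (fun s => dot (pt s - pt t) v₀) hsm)
  -- (iii) points close to `pt t` are in the hull
  have hsub : Metric.ball (pt t) (ε / 2) ⊆ Newt g := by
    intro x hxball
    by_contra hx
    obtain ⟨v, u0, hvu, hxu⟩ := sep_point (convex_convexHull ℝ _)
      (((Set.Finite.image pt g.support.finite_toSet).isCompact_convexHull ℝ).isClosed) hx
    have hvne : v ≠ 0 := by
      intro h
      have h1 := hvu (pt t) (subset_convexHull ℝ _ ⟨t, ht, rfl⟩)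
      rw [h] at h1 hxu
      rw [dot_zero_right] at h1 hxu
      linarith
    have hnv : 0 < ‖v‖ := norm_pos_iff.mpr hvne
    set vh := ‖v‖⁻¹ • v with hvh
    have hvhmem : vh ∈ Metric.sphere (0 : ℝ × ℝ) 1 := by
      rw [Metric.mem_sphere, dist_zero_right, hvh, norm_smul, Real.norm_eq_abs,
        abs_of_pos (by positivity), inv_mul_cancel₀ hnv.ne']
    have hFvh : ε ≤ F vh := isMinOn_iff.mp hv₀min vh hvhmem
    obtain ⟨s, hsm, hseq⟩ := Finset.exists_mem_eq_sup' hs (fun s => dot (pt s - pt t) vh)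
    have hFvh2 : ε ≤ dot (pt s - pt t) vh := by rw [← hseq]; exact hFvh
    clear hFvh
    rename' hFvh2 => hFvh
    have hsv : ε * ‖v‖ ≤ dot (pt s - pt t) v := by
      have h1 : dot (pt s - pt t) vh = ‖v‖⁻¹ * dot (pt s - pt t) v := by
        rw [hvh, dot_smul_right]
      rw [h1] at hFvh
      calc ε * ‖v‖ ≤ (‖v‖⁻¹ * dot (pt s - pt t) v) * ‖v‖ :=
            mul_le_mul_of_nonneg_right hFvh hnv.le
        _ = dot (pt s - pt t) v := by field_simp
    have h2 : dot (pt s) v < u0 := hvu (pt s) (subset_convexHull ℝ _ ⟨s, hsm, rfl⟩)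
    have h3 : dot (x - pt t) v ≤ 2 * ‖x - pt t‖ * ‖v‖ := dot_le_two_norm _ _
    have h4 : ‖x - pt t‖ < ε / 2 := by
      rw [← dist_eq_norm]
      exact Metric.mem_ball.mp hxball
    rw [dot_sub_left] at hsv
    rw [dot_sub_left] at h3
    nlinarith [norm_nonneg (x - pt t)]
  exact mem_interior.mpr ⟨Metric.ball (pt t) (ε / 2), hsub, Metric.isOpen_ball,
    Metric.mem_ball_self (by positivity)⟩

lemma bounded_of_interior (ht : t ∈ g.support)
    (hi : pt t ∈ interior (Newt g)) : Bornology.IsBounded (domain g t) := by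
  have hs : g.support.Nonempty := ⟨t, ht⟩
  obtain ⟨ε, hε, hdir⟩ := eps_dir g hs hi
  set B := (g.support.sup' hs (fun s => g.coeff t - g.coeff s)) ⊔ 0 with hB
  rw [Metric.isBounded_iff_subset_closedBall 0]
  refine ⟨B / ε, fun p hp => ?_⟩
  obtain ⟨s, hsm, hsp⟩ := hdir p
  have hbound : dot (pt s - pt t) p ≤ B := by
    by_cases hst : s = t
    · rw [hst, sub_self]
      have : dot (0 : ℝ × ℝ) p = 0 := by simp [dot]
      rw [this, hB]
      exact le_max_right _ _
    · have h1 : g.val s p < g.val t p := hp s hsm hst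
      rw [val_eq, val_eq] at h1
      have h2 : g.coeff t - g.coeff s ≤ B := by
        rw [hB]
        exact le_trans (Finset.le_sup' (fun s => g.coeff t - g.coeff s) hsm) (le_max_left _ _)
      rw [dot_sub_left]
      linarith
  rw [Metric.mem_closedBall, dist_zero_right]
  rw [le_div_iff₀ hε]
  calc ‖p‖ * ε = ε * ‖p‖ := mul_comm _ _
    _ ≤ dot (pt s - pt t) p := hsp
    _ ≤ B := hbound

end

end Lem55
end Chunk6
section Chunk7
open Lem55 TropPoly2 Finset

namespace Lem55

noncomputable section
open scoped Classical

variable (g : TropPoly2) (t : ℕ × ℕ)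

def Qset : Set (ℝ × ℝ) := {p : ℝ × ℝ | p.1 ≤ 0 ∧ p.2 ≤ 0}

lemma Qset_closed : IsClosed Qset := by
  have : Qset = {p : ℝ × ℝ | p.1 ≤ 0} ∩ {p : ℝ × ℝ | p.2 ≤ 0} := rfl
  rw [this]
  exact (isClosed_le continuous_fst continuous_const).inter
    (isClosed_le continuous_snd continuous_const)

lemma domain_subset_Q (hb : Bornology.IsBounded (domain g t))
    (hf : frontier (domain g t) ⊆ Qset) : domain g t ⊆ Qset := by
  intro p hp
  by_contra hpQ
  set v : ℝ × ℝ := (1, 1) with hv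
  have hnv : ‖v‖ = 1 := by rw [Prod.norm_def]; norm_num
  set T := {lam : ℝ | 0 ≤ lam ∧ p + lam • v ∈ domain g t} with hT
  have h0T : (0 : ℝ) ∈ T := ⟨le_refl 0, by simpa using hp⟩
  obtain ⟨R, hR⟩ := (Metric.isBounded_iff_subset_closedBall 0).mp hb
  have hbdd : BddAbove T := by
    refine ⟨R + ‖p‖, fun lam hlam => ?_⟩
    obtain ⟨hlam0, hlamD⟩ := hlam
    have h1 := hR hlamD
    rw [Metric.mem_closedBall, dist_zero_right] at h1
    have h2 : ‖lam • v‖ ≤ ‖p + lam • v‖ + ‖p‖ := by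
      have h3 := norm_sub_le (p + lam • v) p
      have heq : p + lam • v - p = lam • v := by abel
      rw [heq] at h3; linarith
    rw [norm_smul, Real.norm_eq_abs, abs_of_nonneg hlam0, hnv, mul_one] at h2
    linarith
  set L := sSup T with hL
  have hL0 : 0 ≤ L := le_csSup hbdd h0T
  have hclos : p + L • v ∈ closure (domain g t) := by
    rw [Metric.mem_closure_iff]
    intro ε hε
    obtain ⟨lam, hlamT, hlt⟩ := exists_lt_of_lt_csSup ⟨0, h0T⟩
      (show L - ε < sSup T from by rw [← hL]; linarith)
    have hlamle : lam ≤ L := le_csSup hbdd hlamT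
    refine ⟨p + lam • v, hlamT.2, ?_⟩
    rw [dist_eq_norm]
    have heq : p + L • v - (p + lam • v) = (L - lam) • v := by
      rw [sub_smul]; abel
    rw [heq, norm_smul, Real.norm_eq_abs, abs_of_nonneg (by linarith), hnv, mul_one]
    linarith
  have hnot : p + L • v ∉ domain g t := by
    intro hmem
    obtain ⟨r, hr, hball⟩ := Metric.isOpen_iff.mp (domain_open g t) _ hmem
    have hmem2 : p + (L + r / 2) • v ∈ domain g t := by
      apply hball
      rw [Metric.mem_ball, dist_eq_norm]
      have heq : p + (L + r / 2) • v - (p + L • v) = (r / 2) • v := by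
        rw [add_smul]; abel
      rw [heq, norm_smul, Real.norm_eq_abs, abs_of_pos (by linarith), hnv, mul_one]
      linarith
    have hmemT : L + r / 2 ∈ T := ⟨by linarith, hmem2⟩
    have := le_csSup hbdd hmemT
    rw [← hL] at this
    linarith
  have hfr : p + L • v ∈ frontier (domain g t) := by
    rw [frontier, (domain_open g t).interior_eq]
    exact ⟨hclos, hnot⟩
  have hQ := hf hfr
  obtain ⟨hq1, hq2⟩ := hQ
  have hc1 : (p + L • v).1 = p.1 + L := by simp [hv]
  have hc2 : (p + L • v).2 = p.2 + L := by simp [hv]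
  rw [hc1] at hq1
  rw [hc2] at hq2
  exact hpQ ⟨by linarith, by linarith⟩

lemma interiorK_of (ht : t ∈ g.support) (hne : (domain g t).Nonempty)
    (hb : Bornology.IsBounded (domain g t)) (hf : frontier (domain g t) ⊆ Qset) :
    pt t ∈ interior (Ksupp g) := by
  have hs : g.support.Nonempty := ⟨t, ht⟩
  have hdomQ : domain g t ⊆ Qset := domain_subset_Q g t hb hf
  have hclosQ : closure (domain g t) ⊆ Qset := closure_minimal hdomQ (Qset_closed)
  have hAQ : Aset g t ⊆ Qset := fun p hp => hclosQ (Aset_subset_closure g t hne hp)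
  have hti : pt t ∈ interior (Newt g) := interior_of_bounded g t ht hne hb
  obtain ⟨δ, hδpos, hδ⟩ := exists_delta g t
  obtain ⟨ρ, hρpos, hρ⟩ := Metric.isOpen_iff.mp isOpen_interior _ hti
  have hrpos : 0 < min δ ρ := lt_min hδpos hρpos
  have hsub : Metric.ball (pt t) (min δ ρ) ⊆ Ksupp g := by
    intro x hx
    have hxN : x ∈ interior (Newt g) :=
      hρ (Metric.ball_subset_ball (min_le_right _ _) hx)
    obtain ⟨p₁, hp₁⟩ := exists_min g hs hxN
    have hxcell : x ∈ dualCell g p₁ := mem_dualCell_of_min g hs hp₁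
    have hdist : dist (pt t) x < δ := by
      rw [dist_comm]
      exact lt_of_lt_of_le (Metric.mem_ball.mp hx) (min_le_left _ _)
    have hp₁A : p₁ ∈ Aset g t := min_mem_Aset g t hs ht hne hδ hdist hp₁
    have hp₁Q : p₁ ∈ Qset := hAQ hp₁A
    exact Set.mem_biUnion hp₁Q hxcell
  exact mem_interior.mpr ⟨_, hsub, Metric.isOpen_ball, Metric.mem_ball_self hrpos⟩

lemma of_interiorK (ht : t ∈ g.support) (hne : (domain g t).Nonempty)
    (hi : pt t ∈ interior (Ksupp g)) :
    Bornology.IsBounded (domain g t) ∧ frontier (domain g t) ⊆ Qset := by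
  have hs : g.support.Nonempty := ⟨t, ht⟩
  have hKN : Ksupp g ⊆ Newt g := by
    refine Set.iUnion₂_subset fun p hp => ?_
    rw [dualCell_def]
    apply convexHull_mono
    rintro y ⟨u, hu, rfl, -⟩
    exact ⟨u, hu, rfl⟩
  have hti : pt t ∈ interior (Newt g) := interior_mono hKN hi
  have hb := bounded_of_interior g t ht hti
  refine ⟨hb, ?_⟩
  intro p₀ hp₀
  by_contra hp₀Q
  have hp₀A : p₀ ∈ Aset g t :=
    closure_minimal (domain_subset_Aset g t) (Aset_closed g t) (frontier_subset_closure hp₀)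
  obtain ⟨δ, hδpos, hδ⟩ := exists_delta g t
  obtain ⟨r, hrpos, hr⟩ := Metric.isOpen_iff.mp isOpen_interior _ hi
  have hechoice : ∃ e : ℝ × ℝ, ‖e‖ = 1 ∧
      (∀ q : ℝ × ℝ, q ∈ Qset → dot e q ≤ 0) ∧ 0 < dot e p₀ := by
    have hp₀Q' : ¬(p₀.1 ≤ 0 ∧ p₀.2 ≤ 0) := hp₀Q
    rw [not_and_or, not_le, not_le] at hp₀Q'
    rcases hp₀Q' with h | h
    · refine ⟨(1, 0), by rw [Prod.norm_def]; norm_num, fun q hq => ?_, ?_⟩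
      · simpa [dot] using hq.1
      · simpa [dot] using h
    · refine ⟨(0, 1), by rw [Prod.norm_def]; norm_num, fun q hq => ?_, ?_⟩
      · simpa [dot] using hq.2
      · simpa [dot] using h
  obtain ⟨e, hne1, heQ, hep₀⟩ := hechoice
  have hμpos : 0 < min r δ / 2 := by positivity
  set μ := min r δ / 2 with hμ
  set x := pt t + μ • e with hx
  have hdistx : dist (pt t) x < min r δ := by
    rw [dist_eq_norm, hx]
    have heq : pt t - (pt t + μ • e) = -(μ • e) := by abel
    rw [heq, norm_neg, norm_smul, Real.norm_eq_abs, abs_of_pos hμpos, hne1, mul_one]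
    rw [hμ]
    linarith [lt_min hrpos hδpos]
  have hxK : x ∈ Ksupp g := by
    apply interior_subset
    apply hr
    rw [Metric.mem_ball, dist_comm]
    exact lt_of_lt_of_le hdistx (min_le_left _ _)
  obtain ⟨q, hqQ, hqcell⟩ : ∃ q ∈ {p : ℝ × ℝ | p.1 ≤ 0 ∧ p.2 ≤ 0}, x ∈ dualCell g q := by
    simpa [Ksupp, Set.mem_iUnion] using hxK
  have hqmin : ∀ z, fx g hs x q ≤ fx g hs x z := min_of_mem_dualCell g hs hqcell
  have hqA : q ∈ Aset g t :=
    min_mem_Aset g t hs ht hne hδ (lt_of_lt_of_le hdistx (min_le_right r δ)) hqmin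
  have hcompute : ∀ z, z ∈ Aset g t → fx g hs x z = g.coeff t - μ * dot e z := by
    intro z hz
    simp only [fx, hx]
    rw [gsup_eq_val_t g t hs ht hz, val_eq, dot_add_left, dot_smul_left]
    ring
  have h1 : fx g hs x q ≤ fx g hs x p₀ := hqmin p₀
  rw [hcompute q hqA, hcompute p₀ hp₀A] at h1
  have h2 : dot e p₀ ≤ dot e q := by
    have hmul : μ * dot e p₀ ≤ μ * dot e q := by linarith
    exact (mul_le_mul_iff_right₀ hμpos).mp hmul
  have h3 : dot e q ≤ 0 := heQ q hqQ
  linarith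

end

end Lem55
end Chunk7


open TropPoly2 in
/-- Lemma 5.5 of the paper: a domain `D` of `ℝ² ∖ V(g)` is bounded (equivalently,
enclosed by a cycle of `V(g)`) if and only if the corresponding lattice point lies in
the interior of the Newton polytope of `g`; and, more generally, if `D` meets `ℝ≤0²`,
then `D` is enclosed by a cycle of `V(g) ∩ ℝ≤0²` (i.e. `D` is bounded and its boundary
cycle lies in `ℝ≤0²`) if and only if the corresponding `0`-simplex lies in the interior
of `|K|`. -/
theorem domain_bounded_iff_interior_point (g : TropPoly2) (t : ℕ × ℕ)
    (ht : t ∈ g.support) (hne : (domain g t).Nonempty) :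
    (Bornology.IsBounded (domain g t) ↔
      (((t.1 : ℝ), (t.2 : ℝ)) : ℝ × ℝ) ∈ interior (convexHull ℝ
        ((fun s : ℕ × ℕ => (((s.1 : ℝ), (s.2 : ℝ)) : ℝ × ℝ)) ''
          (g.support : Set (ℕ × ℕ))))) ∧
    ((domain g t ∩ {p : ℝ × ℝ | p.1 ≤ 0 ∧ p.2 ≤ 0}).Nonempty →
      ((Bornology.IsBounded (domain g t) ∧
          frontier (domain g t) ⊆ {p : ℝ × ℝ | p.1 ≤ 0 ∧ p.2 ≤ 0}) ↔
        (((t.1 : ℝ), (t.2 : ℝ)) : ℝ × ℝ) ∈ interior (Ksupp g))) := by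
  constructor
  · constructor
    · intro hb
      exact Lem55.interior_of_bounded g t ht hne hb
    · intro hi
      exact Lem55.bounded_of_interior g t ht hi
  · intro _
    constructor
    · rintro ⟨hb, hf⟩
      exact Lem55.interiorK_of g t ht hne hb hf
    · intro hi
      exact Lem55.of_interiorK g t ht hne hi
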